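/- Let f: ℝⁿ → ℝ be continuously differentiable satisfying the L-descent condition for some L > 0, and let sequences {x^k}, {g^k}, {d^k}, {ε_k}, {r_k}, {t_k} follow the IRG scheme with θ < μ, with ρ_k = ε_k for all k, and with constant-type stepsizes t_k ∈ [δ', (2 − δ)/L] for all k, where δ, δ' > 0 and δ' ≤ (2 − δ)/L. Assume that x̄ is an accumulation point of {x^k} and that f satisfies the KL property at x̄. Then x̄ is a stationary point of f and the whole sequence {x^k} converges to x̄. -/

import Mathlib

set_option maxHeartbeats 1000000


open Filter

/-- The general IRG scheme (Algorithm 1): inexact gradients `g^k` with automatically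
controlled errors `ε_k` (and manual errors `ρ_k`), radius updates with factors
`μ, θ ∈ (0,1)`, reduced directions `d^k`, and iterations `x^{k+1} = x^k + t_k d^k`. -/
def IRGScheme {n : ℕ} (f : EuclideanSpace ℝ (Fin n) → ℝ)
    (x g d : ℕ → EuclideanSpace ℝ (Fin n)) (ε r ρ t : ℕ → ℝ) (μ θ : ℝ) : Prop :=
  (0 < μ ∧ μ < 1) ∧ (0 < θ ∧ θ < 1) ∧
  (∀ k, 0 < ε k) ∧ (∀ k, 0 < r k) ∧ (∀ k, 0 < ρ k) ∧ (∀ k, 0 < t k) ∧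
  (∀ k, ‖g k - gradient f (x k)‖ ≤ min (ε k) (ρ k)) ∧
  (∀ k, ‖g k‖ ≤ r k + ε k →
    r (k + 1) = μ * r k ∧ ε (k + 1) = θ * ε k ∧ d k = 0) ∧
  (∀ k, r k + ε k < ‖g k‖ →
    r (k + 1) = r k ∧ ε (k + 1) = ε k ∧
      d k = -(((‖g k‖ - ε k) / ‖g k‖) • g k)) ∧
  (∀ k, x (k + 1) = x k + t k • d k)

/-- The Kurdyka–Łojasiewicz property of `f` at `xbar` (Definition 2.2): there are
`η > 0`, a neighborhood `U` of `xbar`, and a nondecreasing function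
`ψ : (0, η) → (0, ∞)` with `1/ψ` integrable over `(0, η)` such that
`‖∇f(y)‖ ≥ ψ(f(y) - f(xbar))` whenever `y ∈ U` and `f(xbar) < f(y) < f(xbar) + η`. -/
def KLProperty {n : ℕ} (f : EuclideanSpace ℝ (Fin n) → ℝ)
    (xbar : EuclideanSpace ℝ (Fin n)) : Prop :=
  ∃ η > (0 : ℝ), ∃ U ∈ nhds xbar, ∃ ψ : ℝ → ℝ,
    (∀ s ∈ Set.Ioo (0 : ℝ) η, 0 < ψ s) ∧
    MonotoneOn ψ (Set.Ioo (0 : ℝ) η) ∧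
    MeasureTheory.IntegrableOn (fun s => 1 / ψ s) (Set.Ioo (0 : ℝ) η) ∧
    ∀ y ∈ U, f xbar < f y → f y < f xbar + η → ψ (f y - f xbar) ≤ ‖gradient f y‖

/-- Theorem 5.6: for the IRG method with constant-type stepsizes
`t_k ∈ [δ', (2-δ)/L]`, `θ < μ`, `ρ_k = ε_k`, under the L-descent condition, if `xbar`
is an accumulation point of `{x^k}` and `f` satisfies the KL property at `xbar`, then
`xbar` is a stationary point of `f` and `x^k → xbar`. -/

lemma aux_int_lb (ψ : ℝ → ℝ) (η : ℝ)
    (hψpos : ∀ s ∈ Set.Ioo (0:ℝ) η, 0 < ψ s)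
    (hmono : MonotoneOn ψ (Set.Ioo (0:ℝ) η))
    (hint : MeasureTheory.IntegrableOn (fun s => 1 / ψ s) (Set.Ioo (0:ℝ) η))
    (a b : ℝ) (ha : 0 < a) (hab : a ≤ b) (hb : b < η) :
    (b - a) / ψ b ≤ (∫ τ in Set.Ioo (0:ℝ) b, 1 / ψ τ) - ∫ τ in Set.Ioo (0:ℝ) a, 1 / ψ τ := by
  have hbmem : b ∈ Set.Ioo (0:ℝ) η := ⟨lt_of_lt_of_le ha hab, hb⟩
  rcases eq_or_lt_of_le hab with rfl | hab'
  · simp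
  have hsplit : Set.Ioo (0:ℝ) a ∪ Set.Ico a b = Set.Ioo 0 b :=
    Set.Ioo_union_Ico_eq_Ioo ha hab
  have hdisj : Disjoint (Set.Ioo (0:ℝ) a) (Set.Ico a b) := by
    apply Set.disjoint_left.mpr
    rintro τ ⟨_, h2⟩ ⟨h3, _⟩; exact absurd h3 (not_le.mpr h2)
  have hi1 : MeasureTheory.IntegrableOn (fun s => 1 / ψ s) (Set.Ioo (0:ℝ) a) :=
    hint.mono_set (Set.Ioo_subset_Ioo le_rfl (le_of_lt (lt_of_le_of_lt hab hb)))
  have hi2 : MeasureTheory.IntegrableOn (fun s => 1 / ψ s) (Set.Ico a b) := by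
    apply hint.mono_set
    intro τ ⟨h1, h2⟩; exact ⟨lt_of_lt_of_le ha h1, lt_trans h2 hb⟩
  have hunion := MeasureTheory.setIntegral_union hdisj measurableSet_Ico hi1 hi2
  rw [hsplit] at hunion
  rw [hunion]
  have heq : (∫ τ in Set.Ico a b, 1 / ψ τ) = ∫ τ in Set.Ioo a b, 1 / ψ τ :=
    MeasureTheory.integral_Ico_eq_integral_Ioo
  have hlb : (1 / ψ b) * (MeasureTheory.volume (Set.Ioo a b)).toReal
      ≤ ∫ τ in Set.Ioo a b, 1 / ψ τ := by
    apply MeasureTheory.setIntegral_ge_of_const_le_real measurableSet_Ioo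
    · rw [Real.volume_Ioo]; exact ENNReal.ofReal_ne_top
    · intro τ ⟨h1, h2⟩
      have hτmem : τ ∈ Set.Ioo (0:ℝ) η := ⟨lt_trans ha h1, lt_trans h2 hb⟩
      exact one_div_le_one_div_of_le (hψpos τ hτmem) (hmono hτmem hbmem (le_of_lt h2))
    · exact hi2.mono_set Set.Ioo_subset_Ico_self
  rw [Real.volume_Ioo, ENNReal.toReal_ofReal (by linarith)] at hlb
  rw [heq] at hunion ⊢
  rw [div_eq_mul_one_div, mul_comm]
  linarith


lemma aux_tendsto_A (ψ : ℝ → ℝ) (η : ℝ) (hη : 0 < η)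
    (hψpos : ∀ s ∈ Set.Ioo (0:ℝ) η, 0 < ψ s)
    (hint : MeasureTheory.IntegrableOn (fun s => 1 / ψ s) (Set.Ioo (0:ℝ) η))
    (s : ℕ → ℝ) (hsη : ∀ j, s j < η)
    (hto : Tendsto s atTop (nhds 0)) :
    Tendsto (fun j => ∫ τ in Set.Ioo (0:ℝ) (s j), 1 / ψ τ) atTop (nhds 0) := by
  set μ := MeasureTheory.volume.restrict (Set.Ioo (0:ℝ) η) with hμ
  have key : Tendsto (fun j => ∫ τ, (Set.Ioo (0:ℝ) (s j)).indicator (fun τ => 1 / ψ τ) τ ∂μ)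
      atTop (nhds (∫ (_ : ℝ), (0:ℝ) ∂μ)) := by
    apply MeasureTheory.tendsto_integral_of_dominated_convergence (fun τ => 1 / ψ τ)
    · intro j
      exact (hint.aestronglyMeasurable).indicator measurableSet_Ioo
    · exact hint
    · intro j
      rw [MeasureTheory.ae_restrict_iff' measurableSet_Ioo]
      apply MeasureTheory.ae_of_all
      intro τ hτ
      by_cases h : τ ∈ Set.Ioo (0:ℝ) (s j)
      · rw [Set.indicator_of_mem h, Real.norm_eq_abs,
          abs_of_nonneg (le_of_lt (one_div_pos.mpr (hψpos τ hτ)))]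
      · rw [Set.indicator_of_notMem h, norm_zero]
        exact le_of_lt (one_div_pos.mpr (hψpos τ hτ))
    · rw [MeasureTheory.ae_restrict_iff' measurableSet_Ioo]
      apply MeasureTheory.ae_of_all
      intro τ hτ
      have hev : ∀ᶠ j in atTop, (Set.Ioo (0:ℝ) (s j)).indicator (fun τ => 1 / ψ τ) τ = 0 := by
        filter_upwards [hto.eventually (gt_mem_nhds hτ.1)] with j hj
        exact Set.indicator_of_notMem (fun hmem => absurd hmem.2 (not_lt.mpr (le_of_lt hj))) _
      exact Tendsto.congr' (hev.mono fun j h => h.symm) tendsto_const_nhds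
  rw [MeasureTheory.integral_zero] at key
  apply key.congr
  intro j
  rw [MeasureTheory.setIntegral_indicator measurableSet_Ioo,
    Set.inter_eq_right.mpr (Set.Ioo_subset_Ioo le_rfl (hsη j).le)]

theorem stmt19 {n : ℕ} (f : EuclideanSpace ℝ (Fin n) → ℝ) (hf : ContDiff ℝ 1 f)
    (L : ℝ) (hL : 0 < L)
    (hdesc : ∀ a b : EuclideanSpace ℝ (Fin n),
      f b ≤ f a + (inner ℝ (gradient f a) (b - a) : ℝ) + L / 2 * ‖b - a‖ ^ 2)
    (x g d : ℕ → EuclideanSpace ℝ (Fin n)) (ε r t : ℕ → ℝ) (μ θ : ℝ)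
    (hirg : IRGScheme f x g d ε r ε t μ θ)
    (hθμ : θ < μ)
    (δ δ' : ℝ) (hδ : 0 < δ) (hδ' : 0 < δ') (hδδ' : δ' ≤ (2 - δ) / L)
    (hstep : ∀ k, t k ∈ Set.Icc δ' ((2 - δ) / L))
    (xbar : EuclideanSpace ℝ (Fin n))
    (hacc : ∃ φ : ℕ → ℕ, StrictMono φ ∧ Tendsto (x ∘ φ) atTop (nhds xbar))
    (hKL : KLProperty f xbar) :
    gradient f xbar = 0 ∧ Tendsto x atTop (nhds xbar) := by
  classical
  obtain ⟨⟨hμ0, hμ1⟩, ⟨hθ0, hθ1⟩, hεpos, hrpos, _, htpos, hgerr', hnull, hser, hxup⟩ := hirg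
  have hgerr : ∀ k, ‖g k - gradient f (x k)‖ ≤ ε k := by
    intro k; simpa using hgerr' k
  set T : ℝ := (2 - δ) / L with hT
  have hTpos : 0 < T := lt_of_lt_of_le hδ' hδδ'
  set c : ℝ := δ' * δ / 2 with hc
  have hcpos : 0 < c := by positivity
  -- norm of d on serious steps
  have hgpos : ∀ k, r k + ε k < ‖g k‖ → 0 < ‖g k‖ :=
    fun k h => lt_trans (by have := hεpos k; have := hrpos k; linarith) h
  have hdnorm : ∀ k, r k + ε k < ‖g k‖ → ‖d k‖ = ‖g k‖ - ε k := by
    intro k h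
    have hg0 := hgpos k h
    have hge : ε k ≤ ‖g k‖ := by have := hrpos k; linarith
    rw [(hser k h).2.2, norm_neg, norm_smul, Real.norm_eq_abs,
      abs_of_nonneg (div_nonneg (by linarith) hg0.le), div_mul_cancel₀ _ hg0.ne']
  -- descent inequality
  have hinner : ∀ k, r k + ε k < ‖g k‖ →
      (inner ℝ (gradient f (x k)) (d k) : ℝ) ≤ -‖d k‖ ^ 2 := by
    intro k h
    have hg0 := hgpos k h
    have hεk := hεpos k
    have hrk := hrpos k
    set G := gradient f (x k)
    set lam : ℝ := (‖g k‖ - ε k) / ‖g k‖ with hlam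
    have hd : d k = -(lam • g k) := (hser k h).2.2
    have hlamnn : 0 ≤ lam := div_nonneg (by linarith) hg0.le
    have h1 : (inner ℝ (g k) (d k) : ℝ) = -(lam * ‖g k‖ ^ 2) := by
      rw [hd, inner_neg_right, real_inner_smul_right, real_inner_self_eq_norm_sq]
    have h2 : (inner ℝ (G - g k) (d k) : ℝ) ≤ ε k * ‖d k‖ := by
      calc (inner ℝ (G - g k) (d k) : ℝ) ≤ ‖G - g k‖ * ‖d k‖ := real_inner_le_norm _ _
        _ ≤ ε k * ‖d k‖ := by
            apply mul_le_mul_of_nonneg_right _ (norm_nonneg _)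
            rw [← norm_neg]; simpa [neg_sub] using hgerr k
    have h3 : (inner ℝ G (d k) : ℝ) = inner ℝ (g k) (d k) + (inner ℝ (G - g k) (d k) : ℝ) := by
      rw [← inner_add_left]
      congr 1
      abel
    have hdn := hdnorm k h
    have hlg : lam * ‖g k‖ = ‖g k‖ - ε k := by
      rw [hlam, div_mul_cancel₀ _ hg0.ne']
    calc (inner ℝ G (d k) : ℝ) ≤ -(lam * ‖g k‖ ^ 2) + ε k * ‖d k‖ := by
          rw [h3]; linarith [h1, h2]
      _ ≤ -‖d k‖ ^ 2 := by
          rw [hdn]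
          nlinarith [hlg]
  have hdesc_step : ∀ k, f (x (k + 1)) ≤ f (x k) - c * ‖d k‖ ^ 2 := by
    intro k
    rcases le_or_gt ‖g k‖ (r k + ε k) with h | h
    · have hd0 : d k = 0 := (hnull k h).2.2
      rw [hxup k, hd0, smul_zero, add_zero]
      simp
    · have hxk : x (k + 1) - x k = t k • d k := by rw [hxup k]; abel
      have hb := hdesc (x k) (x (k + 1))
      rw [hxk] at hb
      have hIn : (inner ℝ (gradient f (x k)) (t k • d k) : ℝ)
          = t k * inner ℝ (gradient f (x k)) (d k) := real_inner_smul_right _ _ _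
      have hnsm : ‖t k • d k‖ ^ 2 = t k ^ 2 * ‖d k‖ ^ 2 := by
        rw [norm_smul, Real.norm_eq_abs, abs_of_nonneg (htpos k).le, mul_pow]
      rw [hIn, hnsm] at hb
      have hi := hinner k h
      have ht1 : δ' ≤ t k := (hstep k).1
      have ht2 : L * t k ≤ 2 - δ := by
        have := (hstep k).2
        rw [hT] at this
        calc L * t k ≤ L * ((2 - δ) / L) := by
              apply mul_le_mul_of_nonneg_left this hL.le
          _ = 2 - δ := by field_simp
      have htk := htpos k
      have hdnn : (0:ℝ) ≤ ‖d k‖ ^ 2 := sq_nonneg _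
      nlinarith [mul_le_mul_of_nonneg_left hi htk.le,
        mul_nonneg (mul_nonneg (by linarith : (0:ℝ) ≤ 2 - δ - L * t k) htk.le) hdnn,
        mul_nonneg (mul_nonneg (by linarith : (0:ℝ) ≤ t k - δ') hδ.le) hdnn]
  have hFanti : Antitone (fun k => f (x k)) := by
    apply antitone_nat_of_succ_le
    intro k
    have := hdesc_step k
    nlinarith [sq_nonneg ‖d k‖, hcpos]
  obtain ⟨φ, hφmono, hφto⟩ := hacc
  have hFφ : Tendsto (fun j => f (x (φ j))) atTop (nhds (f xbar)) :=
    (hf.continuous.tendsto xbar).comp hφto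
  have hFlb : ∀ k, f xbar ≤ f (x k) := by
    intro k
    apply le_of_tendsto hFφ
    filter_upwards [eventually_ge_atTop k] with j hj
    exact hFanti (le_trans hj hφmono.le_apply)
  have hFto : Tendsto (fun k => f (x k)) atTop (nhds (f xbar)) := by
    have hbdd : BddBelow (Set.range (fun k => f (x k))) := by
      refine ⟨f xbar, ?_⟩
      rintro y ⟨k, rfl⟩
      exact hFlb k
    have h1 : Tendsto (fun k => f (x k)) atTop (nhds (⨅ k, f (x k))) :=
      tendsto_atTop_ciInf hFanti hbdd
    have h2 : Tendsto (fun j => f (x (φ j))) atTop (nhds (⨅ k, f (x k))) :=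
      h1.comp hφmono.tendsto_atTop
    rwa [tendsto_nhds_unique h2 hFφ] at h1
  -- infinitely many null steps
  have hinf : ∀ K, ∃ k, K ≤ k ∧ ‖g k‖ ≤ r k + ε k := by
    intro K
    by_contra hcon
    push_neg at hcon
    have hser' : ∀ m : ℕ, r (K + m) + ε (K + m) < ‖g (K + m)‖ :=
      fun m => hcon (K + m) (Nat.le_add_right K m)
    have hrconst : ∀ m : ℕ, r (K + m) = r K := by
      intro m
      induction m with
      | zero => rfl
      | succ m ih =>
        have h := (hser (K + m) (hser' m)).1
        have : K + (m + 1) = (K + m) + 1 := by omega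
        rw [this, h, ih]
    have hstepdec : ∀ m : ℕ, f (x (K + m + 1)) ≤ f (x (K + m)) - c * r K ^ 2 := by
      intro m
      have h1 := hdesc_step (K + m)
      have h2 : r K ≤ ‖d (K + m)‖ := by
        rw [hdnorm (K + m) (hser' m)]
        have := hser' m
        rw [hrconst m] at this
        linarith [hεpos (K + m)]
      have h3 : c * r K ^ 2 ≤ c * ‖d (K + m)‖ ^ 2 := by
        apply mul_le_mul_of_nonneg_left _ hcpos.le
        exact pow_le_pow_left₀ (hrpos K).le h2 2
      linarith
    have hiter : ∀ m : ℕ, f (x (K + m)) ≤ f (x K) - m * (c * r K ^ 2) := by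
      intro m
      induction m with
      | zero => simp
      | succ m ih =>
        have := hstepdec m
        push_cast
        rw [← Nat.add_assoc]
        push_cast at ih
        linarith
    obtain ⟨m, hm⟩ := exists_nat_gt ((f (x K) - f xbar) / (c * r K ^ 2))
    have hpos : 0 < c * r K ^ 2 := mul_pos hcpos (pow_pos (hrpos K) 2)
    have := hiter m
    have hgt : f (x K) - f xbar < m * (c * r K ^ 2) := by
      rw [div_lt_iff₀ hpos] at hm
      linarith
    linarith [hFlb (K + m)]
  -- the null-step counter
  set N : ℕ → ℕ := fun k => ((Finset.range k).filter (fun j => ‖g j‖ ≤ r j + ε j)).card with hN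
  have hNsucc : ∀ k, (‖g k‖ ≤ r k + ε k → N (k + 1) = N k + 1)
      ∧ (r k + ε k < ‖g k‖ → N (k + 1) = N k) := by
    intro k
    constructor <;> intro h <;>
      simp only [hN, Finset.range_add_one, Finset.filter_insert]
    · rw [if_pos h, Finset.card_insert_of_notMem (by simp)]
    · rw [if_neg (not_le.mpr h)]
  have hNformula : ∀ k, ε k = θ ^ (N k) * ε 0 ∧ r k = μ ^ (N k) * r 0 := by
    intro k
    induction k with
    | zero => simp [hN]
    | succ k ih =>
      rcases le_or_gt ‖g k‖ (r k + ε k) with h | h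
      · rw [(hNsucc k).1 h, (hnull k h).2.1, (hnull k h).1, ih.1, ih.2]
        constructor <;> ring
      · rw [(hNsucc k).2 h, (hser k h).2.1, (hser k h).1, ih.1, ih.2]
        exact ⟨rfl, rfl⟩
  have hNmono : Monotone N := by
    intro a b hab
    exact Finset.card_le_card (Finset.filter_subset_filter _
      (Finset.range_subset_range.mpr hab))
  have hNto : Tendsto N atTop atTop := by
    apply tendsto_atTop_atTop_of_monotone hNmono
    intro B
    induction B with
    | zero => exact ⟨0, Nat.zero_le _⟩
    | succ B ih =>
      obtain ⟨a, ha⟩ := ih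
      obtain ⟨k, hk, hknull⟩ := hinf a
      refine ⟨k + 1, ?_⟩
      rw [(hNsucc k).1 hknull]
      have : N a ≤ N k := hNmono hk
      omega
  have hpowto : ∀ q : ℝ, 0 ≤ q → q < 1 → Tendsto (fun k => q ^ (N k)) atTop (nhds 0) :=
    fun q hq0 hq1 => (tendsto_pow_atTop_nhds_zero_of_lt_one hq0 hq1).comp hNto
  have hrto : Tendsto r atTop (nhds 0) := by
    have := (hpowto μ hμ0.le hμ1).mul_const (r 0)
    rw [zero_mul] at this
    apply this.congr
    intro k
    exact ((hNformula k).2).symm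
  have hεto : Tendsto ε atTop (nhds 0) := by
    have := (hpowto θ hθ0.le hθ1).mul_const (ε 0)
    rw [zero_mul] at this
    apply this.congr
    intro k
    exact ((hNformula k).1).symm
  have hεr : ∃ K₁, ∀ k, K₁ ≤ k → ε k ≤ r k := by
    have hq1 : θ / μ < 1 := (div_lt_one hμ0).mpr hθμ
    have hq0 : 0 ≤ θ / μ := div_nonneg hθ0.le hμ0.le
    have hto := (hpowto (θ / μ) hq0 hq1).mul_const (ε 0)
    rw [zero_mul] at hto
    have hev : ∀ᶠ k in atTop, (θ / μ) ^ (N k) * ε 0 < r 0 :=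
      hto.eventually (gt_mem_nhds (hrpos 0))
    obtain ⟨K₁, hK₁⟩ := hev.exists_forall_of_atTop
    refine ⟨K₁, fun k hk => ?_⟩
    have h := hK₁ k hk
    rw [(hNformula k).1, (hNformula k).2]
    have hdiv : (θ / μ) ^ (N k) = θ ^ (N k) / μ ^ (N k) := div_pow θ μ (N k)
    rw [hdiv] at h
    have hμk : 0 < μ ^ (N k) := pow_pos hμ0 _
    rw [div_mul_eq_mul_div, div_lt_iff₀ hμk] at h
    have : θ ^ (N k) * ε 0 < μ ^ (N k) * r 0 := by linarith [h]
    exact this.le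
    
  -- convergence of the whole sequence
  obtain ⟨K₁, hK₁⟩ := hεr
  have hxto : Tendsto x atTop (nhds xbar) := by
    obtain ⟨η, hη, U, hU, ψ, hψpos, hψmono, hψint, hKLineq⟩ := hKL
    obtain ⟨ρ, hρpos, hball⟩ := Metric.mem_nhds_iff.mp hU
    by_cases hcase : ∃ k₀, f (x k₀) ≤ f xbar
    · -- Case (i): the objective value hits the limit value; iterates eventually constant
      obtain ⟨k₀, hk₀⟩ := hcase
      have hFeq : ∀ k, k₀ ≤ k → f (x k) = f xbar :=
        fun k hk => le_antisymm (le_trans (hFanti hk) hk₀) (hFlb k)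
      have hxconst : ∀ k, k₀ ≤ k → x k = x k₀ := by
        intro k hk
        induction k with
        | zero => rw [Nat.le_zero.mp hk]
        | succ k ih =>
          rcases Nat.lt_or_ge k₀ (k + 1) with h | h
          · have hkk : k₀ ≤ k := Nat.lt_succ_iff.mp h
            have hd0 : ‖d k‖ ^ 2 ≤ 0 := by
              have h1 := hdesc_step k
              rw [hFeq k hkk, hFeq (k + 1) (Nat.le_succ_of_le hkk)] at h1
              nlinarith
            have hd0' : d k = 0 := by
              have := sq_nonneg ‖d k‖
              have : ‖d k‖ ^ 2 = 0 := le_antisymm hd0 this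
              simpa [pow_eq_zero_iff] using this
            rw [hxup k, hd0', smul_zero, add_zero]
            exact ih hkk
          · have heq : k₀ = k + 1 := le_antisymm hk h
            rw [← heq]
      have hxc : Tendsto x atTop (nhds (x k₀)) := by
        apply tendsto_atTop_of_eventually_const (i₀ := k₀)
        exact fun i hi => hxconst i hi
      have hxφc : Tendsto (x ∘ φ) atTop (nhds (x k₀)) :=
        hxc.comp hφmono.tendsto_atTop
      rwa [tendsto_nhds_unique hxφc hφto] at hxc
    · -- Case (ii): f (x k) > f xbar for all k
      push_neg at hcase
      set fs : ℝ := f xbar with hfs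
      set B : ℝ := 3 * T / c with hB
      have hBpos : 0 < B := by positivity
      set A : ℝ → ℝ := fun s => ∫ τ in Set.Ioo (0:ℝ) s, 1 / ψ τ with hA
      have hAnn : ∀ s, s < η → 0 ≤ A s := by
        intro s hs
        apply MeasureTheory.setIntegral_nonneg measurableSet_Ioo
        intro τ hτ
        exact (one_div_pos.mpr (hψpos τ ⟨hτ.1, lt_trans hτ.2 hs⟩)).le
      have hAlb : ∀ a b, 0 < a → a ≤ b → b < η →
          (b - a) / ψ b ≤ A b - A a :=
        fun a b ha hab hb => aux_int_lb ψ η hψpos hψmono hψint a b ha hab hb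
      have hAmono : ∀ a b, 0 < a → a ≤ b → b < η → A a ≤ A b := by
        intro a b ha hab hb
        have h1 := hAlb a b ha hab hb
        have h2 : 0 ≤ (b - a) / ψ b :=
          div_nonneg (by linarith) (hψpos b ⟨lt_of_lt_of_le ha hab, hb⟩).le
        linarith
      -- choose the starting index k₀
      obtain ⟨j₀, hj₀⟩ : ∃ j₀, K₁ ≤ φ j₀ ∧ f (x (φ j₀)) - fs < η / 2 ∧
          dist (x (φ j₀)) xbar < ρ / 2 ∧ B * A (f (x (φ j₀)) - fs) < ρ / 2 := by
        set s : ℕ → ℝ := fun j => f (x (φ j)) - fs with hsdef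
        have hsto : Tendsto s atTop (nhds 0) := by
          have := hFφ.sub_const fs
          rwa [hfs, sub_self] at this
        have hspos : ∀ j, 0 < s j := fun j => sub_pos.mpr (hcase (φ j))
        set s' : ℕ → ℝ := fun j => min (s j) (η / 2) with hs'def
        have hs'η : ∀ j, s' j < η := fun j =>
          lt_of_le_of_lt (min_le_right _ _) (by linarith)
        have hs'to : Tendsto s' atTop (nhds 0) := by
          have h1 : Tendsto (fun j => min (s j) (η / 2)) atTop (nhds (min 0 (η / 2))) :=
            hsto.min tendsto_const_nhds
          rwa [min_eq_left (by linarith)] at h1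
        have hAto : Tendsto (fun j => A (s' j)) atTop (nhds 0) :=
          aux_tendsto_A ψ η hη hψpos hψint s' hs'η hs'to
        have hBAto : Tendsto (fun j => B * A (s' j)) atTop (nhds 0) := by
          have := hAto.const_mul B
          rwa [mul_zero] at this
        have E1 : ∀ᶠ j in atTop, K₁ ≤ φ j := by
          filter_upwards [eventually_ge_atTop K₁] with j hj
          exact le_trans hj hφmono.le_apply
        have E2 : ∀ᶠ j in atTop, s j < η / 2 :=
          hsto.eventually (gt_mem_nhds (by linarith))
        have E3 : ∀ᶠ j in atTop, dist (x (φ j)) xbar < ρ / 2 := by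
          have := hφto.eventually (Metric.ball_mem_nhds xbar (by linarith : (0:ℝ) < ρ / 2))
          filter_upwards [this] with j hj
          exact Metric.mem_ball.mp hj
        have E4 : ∀ᶠ j in atTop, B * A (s' j) < ρ / 2 :=
          hBAto.eventually (gt_mem_nhds (by linarith))
        obtain ⟨j₀, h1, h2, h3, h4⟩ := (E1.and (E2.and (E3.and E4))).exists
        refine ⟨j₀, h1, h2, h3, ?_⟩
        have hmin : s' j₀ = s j₀ := min_eq_left h2.le
        rw [hmin] at h4
        exact h4
      obtain ⟨hk₀K₁, hk₀η, hk₀dist, hk₀A⟩ := hj₀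
      set k₀ := φ j₀ with hk₀
      set s₀ : ℝ := f (x k₀) - fs with hs₀
      have hs₀pos : 0 < s₀ := sub_pos.mpr (hcase k₀)
      have hs₀η : s₀ < η := by
        have : (0:ℝ) < η := hη
        rw [hs₀]; linarith [hk₀η]
      have hFwin : ∀ k, k₀ ≤ k → 0 < f (x k) - fs ∧ f (x k) - fs ≤ s₀ := by
        intro k hk
        exact ⟨sub_pos.mpr (hcase k), by have := hFanti hk; rw [hs₀]; linarith⟩
      -- the key induction
      have key : ∀ m : ℕ,
          (∑ j ∈ Finset.range m, ‖x (k₀ + j + 1) - x (k₀ + j)‖)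
            ≤ B * (A s₀ - A (f (x (k₀ + m)) - fs)) ∧ dist (x (k₀ + m)) xbar < ρ := by
        intro m
        induction m with
        | zero =>
          refine ⟨by simp [← hs₀], ?_⟩
          rw [Nat.add_zero]
          exact lt_trans hk₀dist (by linarith)
        | succ m ih =>
          obtain ⟨hsum, hdist⟩ := ih
          set k := k₀ + m with hkdef
          have hidx : k₀ + (m + 1) = k + 1 := by omega
          have hwin := hFwin k (Nat.le_add_right _ _)
          have hwin1 := hFwin (k + 1) (by omega)
          have hFk1η : f (x (k + 1)) - fs < η := lt_of_le_of_lt hwin1.2 hs₀η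
          have hFkη : f (x k) - fs < η := lt_of_le_of_lt hwin.2 hs₀η
          have hFle : f (x (k + 1)) ≤ f (x k) := hFanti (Nat.le_succ k)
          have hΔA : 0 ≤ A (f (x k) - fs) - A (f (x (k + 1)) - fs) := by
            have := hAmono (f (x (k + 1)) - fs) (f (x k) - fs) hwin1.1
              (by linarith) hFkη
            linarith
          have hstepbd : ‖x (k + 1) - x k‖
              ≤ B * (A (f (x k) - fs) - A (f (x (k + 1)) - fs)) := by
            rcases le_or_gt ‖g k‖ (r k + ε k) with hcnull | hcser
            · have hd0 : d k = 0 := (hnull k hcnull).2.2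
              have hx1 : x (k + 1) - x k = 0 := by
                rw [hxup k, hd0, smul_zero, add_zero, sub_self]
              rw [hx1, norm_zero]
              exact mul_nonneg hBpos.le hΔA
            · have hεrk : ε k ≤ r k := hK₁ k (le_trans hk₀K₁ (Nat.le_add_right _ _))
              have hdn := hdnorm k hcser
              have hxkU : x k ∈ U := hball (Metric.mem_ball.mpr hdist)
              have hKLk : ψ (f (x k) - fs) ≤ ‖gradient f (x k)‖ :=
                hKLineq (x k) hxkU (hcase k) (by linarith [hFkη])
              have hgradle : ‖gradient f (x k)‖ ≤ ‖g k‖ + ε k := by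
                have h1 := hgerr k
                calc ‖gradient f (x k)‖ = ‖g k - (g k - gradient f (x k))‖ := by
                      congr 1; abel
                  _ ≤ ‖g k‖ + ‖g k - gradient f (x k)‖ := norm_sub_le _ _
                  _ ≤ ‖g k‖ + ε k := by linarith
              have h3d : ψ (f (x k) - fs) ≤ 3 * ‖d k‖ := by
                rw [hdn]; linarith
              have hψbpos : 0 < ψ (f (x k) - fs) := hψpos _ ⟨hwin.1, hFkη⟩
              have hlb := hAlb (f (x (k + 1)) - fs) (f (x k) - fs) hwin1.1
                (by linarith) hFkη
              have hdrop : c * ‖d k‖ ^ 2 ≤ f (x k) - f (x (k + 1)) := by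
                have := hdesc_step k; linarith
              have hdrople : f (x k) - f (x (k + 1))
                  ≤ ψ (f (x k) - fs) * (A (f (x k) - fs) - A (f (x (k + 1)) - fs)) := by
                rw [div_le_iff₀ hψbpos] at hlb
                nlinarith [hlb]
              by_cases hd0 : ‖d k‖ = 0
              · have hx1 : x (k + 1) - x k = 0 := by
                  rw [hxup k, norm_eq_zero.mp hd0, smul_zero, add_zero, sub_self]
                rw [hx1, norm_zero]
                exact mul_nonneg hBpos.le hΔA
              · have hdpos : 0 < ‖d k‖ := lt_of_le_of_ne (norm_nonneg _) (Ne.symm hd0)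
                have hxn : ‖x (k + 1) - x k‖ = t k * ‖d k‖ := by
                  rw [hxup k, add_sub_cancel_left, norm_smul, Real.norm_eq_abs,
                    abs_of_nonneg (htpos k).le]
                have hcd : c * ‖d k‖
                    ≤ 3 * (A (f (x k) - fs) - A (f (x (k + 1)) - fs)) := by
                  apply le_of_mul_le_mul_right _ hdpos
                  calc c * ‖d k‖ * ‖d k‖ = c * ‖d k‖ ^ 2 := by ring
                    _ ≤ f (x k) - f (x (k + 1)) := hdrop
                    _ ≤ ψ (f (x k) - fs)
                        * (A (f (x k) - fs) - A (f (x (k + 1)) - fs)) := hdrople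
                    _ ≤ (3 * ‖d k‖)
                        * (A (f (x k) - fs) - A (f (x (k + 1)) - fs)) :=
                          mul_le_mul_of_nonneg_right h3d hΔA
                    _ = 3 * (A (f (x k) - fs) - A (f (x (k + 1)) - fs)) * ‖d k‖ := by
                          ring
                rw [hxn]
                calc t k * ‖d k‖ ≤ T * ‖d k‖ :=
                      mul_le_mul_of_nonneg_right (hstep k).2 (norm_nonneg _)
                  _ ≤ T * (3 * (A (f (x k) - fs) - A (f (x (k + 1)) - fs)) / c) := by
                      apply mul_le_mul_of_nonneg_left _ hTpos.le
                      rw [le_div_iff₀ hcpos]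
                      nlinarith [hcd]
                  _ = B * (A (f (x k) - fs) - A (f (x (k + 1)) - fs)) := by
                      rw [hB]; field_simp
          have hsum1 : (∑ j ∈ Finset.range (m + 1), ‖x (k₀ + j + 1) - x (k₀ + j)‖)
              ≤ B * (A s₀ - A (f (x (k + 1)) - fs)) := by
            rw [Finset.sum_range_succ]
            have h1 := add_le_add hsum hstepbd
            nlinarith [h1]
          constructor
          · rw [hidx]
            exact hsum1
          · rw [hidx]
            have htel : (∑ j ∈ Finset.range (m + 1), (x (k₀ + j + 1) - x (k₀ + j)))
                = x (k + 1) - x k₀ := by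
              have h := Finset.sum_range_sub (fun j => x (k₀ + j)) (m + 1)
              calc (∑ j ∈ Finset.range (m + 1), (x (k₀ + j + 1) - x (k₀ + j)))
                  = ∑ j ∈ Finset.range (m + 1), (x (k₀ + (j + 1)) - x (k₀ + j)) :=
                    Finset.sum_congr rfl (fun j _ => by rw [Nat.add_assoc])
                _ = x (k₀ + (m + 1)) - x (k₀ + 0) := h
                _ = x (k + 1) - x k₀ := by norm_num [hidx]
            have hnorm : ‖x (k + 1) - x k₀‖
                ≤ ∑ j ∈ Finset.range (m + 1), ‖x (k₀ + j + 1) - x (k₀ + j)‖ := by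
              rw [← htel]
              exact norm_sum_le _ _
            have hAz : 0 ≤ A (f (x (k + 1)) - fs) := hAnn _ hFk1η
            calc dist (x (k + 1)) xbar ≤ dist (x (k + 1)) (x k₀) + dist (x k₀) xbar :=
                  dist_triangle _ _ _
              _ < ρ / 2 + ρ / 2 := by
                  apply add_lt_add_of_le_of_lt _ hk₀dist
                  rw [dist_eq_norm]
                  calc ‖x (k + 1) - x k₀‖
                      ≤ ∑ j ∈ Finset.range (m + 1), ‖x (k₀ + j + 1) - x (k₀ + j)‖ := hnorm
                    _ ≤ B * (A s₀ - A (f (x (k + 1)) - fs)) := hsum1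
                    _ ≤ B * A s₀ := by nlinarith
                    _ ≤ ρ / 2 := hk₀A.le
              _ = ρ := by ring
      -- Cauchy
      have hsummable : Summable (fun m => dist (x (k₀ + m)) (x (k₀ + (m + 1)))) := by
        apply summable_of_sum_range_le (c := B * A s₀) (fun m => dist_nonneg)
        intro m
        have h1 := (key m).1
        have h2 : ∀ j, dist (x (k₀ + j)) (x (k₀ + (j + 1))) = ‖x (k₀ + j + 1) - x (k₀ + j)‖ := by
          intro j
          rw [dist_comm, dist_eq_norm, ← Nat.add_assoc]
        calc (∑ j ∈ Finset.range m, dist (x (k₀ + j)) (x (k₀ + (j + 1))))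
            = ∑ j ∈ Finset.range m, ‖x (k₀ + j + 1) - x (k₀ + j)‖ :=
              Finset.sum_congr rfl (fun j _ => h2 j)
          _ ≤ B * (A s₀ - A (f (x (k₀ + m)) - fs)) := h1
          _ ≤ B * A s₀ := by
              have := hAnn (f (x (k₀ + m)) - fs)
                (lt_of_le_of_lt (hFwin _ (Nat.le_add_right _ _)).2 hs₀η)
              nlinarith
      have hcauchy : CauchySeq (fun m => x (k₀ + m)) :=
        cauchySeq_of_summable_dist hsummable
      obtain ⟨p, hp⟩ := cauchySeq_tendsto_of_complete hcauchy
      have hxp : Tendsto x atTop (nhds p) := by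
        have heq : (fun m => x (k₀ + m)) = (fun m => x (m + k₀)) := by
          funext m; rw [Nat.add_comm]
        rw [heq] at hp
        exact (tendsto_add_atTop_iff_nat k₀).mp hp
      have hxφp : Tendsto (x ∘ φ) atTop (nhds p) :=
        hxp.comp hφmono.tendsto_atTop
      rwa [tendsto_nhds_unique hxφp hφto] at hxp
  refine ⟨?_, hxto⟩
  -- stationarity: the gradient is continuous and vanishes along null steps
  have hgradcont : Continuous (gradient f) := by
    have h1 : Continuous (fderiv ℝ f) := hf.continuous_fderiv one_ne_zero
    exact (LinearIsometryEquiv.continuous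
      (InnerProductSpace.toDual ℝ (EuclideanSpace ℝ (Fin n))).symm).comp h1
  have hgxto : Tendsto (fun k => gradient f (x k)) atTop (nhds (gradient f xbar)) :=
    (hgradcont.tendsto xbar).comp hxto
  by_contra hne
  have hpos : 0 < ‖gradient f xbar‖ := norm_pos_iff.mpr hne
  set e : ℝ := ‖gradient f xbar‖ with he
  have E1 : ∀ᶠ k in atTop, r k < e / 4 := hrto.eventually (gt_mem_nhds (by linarith))
  have E2 : ∀ᶠ k in atTop, ε k < e / 8 := hεto.eventually (gt_mem_nhds (by linarith))
  have E3 : ∀ᶠ k in atTop, dist (gradient f (x k)) (gradient f xbar) < e / 2 := by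
    have := hgxto.eventually (Metric.ball_mem_nhds (gradient f xbar)
      (by linarith : (0:ℝ) < e / 2))
    filter_upwards [this] with k hk
    exact Metric.mem_ball.mp hk
  obtain ⟨K, hK⟩ := (E1.and (E2.and E3)).exists_forall_of_atTop
  obtain ⟨k, hkK, hknull⟩ := hinf K
  obtain ⟨h1, h2, h3⟩ := hK k hkK
  have hg1 : ‖gradient f (x k)‖ ≤ ‖g k‖ + ε k := by
    have hgk := hgerr k
    calc ‖gradient f (x k)‖ = ‖g k - (g k - gradient f (x k))‖ := by congr 1; abel
      _ ≤ ‖g k‖ + ‖g k - gradient f (x k)‖ := norm_sub_le _ _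
      _ ≤ ‖g k‖ + ε k := by linarith
  have hg2 : ‖gradient f (x k)‖ ≤ r k + 2 * ε k := by linarith
  have hg3 : e ≤ ‖gradient f (x k)‖ + dist (gradient f (x k)) (gradient f xbar) := by
    rw [dist_eq_norm, he]
    calc ‖gradient f xbar‖
        = ‖gradient f (x k) - (gradient f (x k) - gradient f xbar)‖ := by congr 1; abel
      _ ≤ ‖gradient f (x k)‖ + ‖gradient f (x k) - gradient f xbar‖ := norm_sub_le _ _
  linarith
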